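/- Let 0 < μ ≤ 1, ζ > 0, ϑ ≥ μζ, 0 < θ ≤ 1, λ > 0 and t > 0. Then for every real s, the generating function of the fractional counting process probabilities satisfies ∑_{n=0}^∞ s^n P(n,t) = Γ(ϑ) · E_{μ,ϑ}^{ζ}(λ t^θ (s − 1)), where the underlying double series converges absolutely. In particular, taking s = 1, ∑_{n=0}^∞ P(n,t) = 1. -/

import Mathlib

open Real

/-- Rising factorial (Pochhammer symbol) `(ζ)_n = Γ(ζ+n)/Γ(ζ)`. -/
noncomputable def risingFactorial (ζ : ℝ) (n : ℕ) : ℝ :=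
  Real.Gamma (ζ + n) / Real.Gamma ζ

/-- Three-parameter (Prabhakar) Mittag-Leffler function. -/
noncomputable def mittagLeffler (μ ϑ ζ z : ℝ) : ℝ :=
  ∑' m : ℕ, risingFactorial ζ m * z ^ m / (m.factorial * Real.Gamma (μ * m + ϑ))

/-- Probability function of the fractional counting process:
`P(n,t) = (ζ)_n Γ(ϑ) (λ t^θ)^n / n! ∑_k (ζ+n)_k (−λ t^θ)^k / (k! Γ(μ(n+k)+ϑ))`. -/
noncomputable def fcpP (μ ϑ ζ θ lam : ℝ) (n : ℕ) (t : ℝ) : ℝ :=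
  risingFactorial ζ n * Real.Gamma ϑ * (lam * t ^ θ) ^ n / n.factorial *
    ∑' k : ℕ, risingFactorial (ζ + n) k * (-(lam * t ^ θ)) ^ k /
      (k.factorial * Real.Gamma (μ * (n + k : ℕ) + ϑ))

section Aux

private lemma rf_pos {ζ : ℝ} (hζ : 0 < ζ) (n : ℕ) : 0 < risingFactorial ζ n :=
  div_pos (Real.Gamma_pos_of_pos (by positivity)) (Real.Gamma_pos_of_pos hζ)

private lemma rf_zero {ζ : ℝ} (hζ : 0 < ζ) : risingFactorial ζ 0 = 1 := by
  simp [risingFactorial, div_self (Real.Gamma_pos_of_pos hζ).ne']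

private lemma rf_succ {ζ : ℝ} (hζ : 0 < ζ) (n : ℕ) :
    risingFactorial ζ (n + 1) = (ζ + n) * risingFactorial ζ n := by
  unfold risingFactorial
  push_cast
  rw [show ζ + ((n : ℝ) + 1) = (ζ + n) + 1 by ring,
    Real.Gamma_add_one (by positivity : (ζ + (n : ℝ)) ≠ 0)]
  ring

private lemma rf_mul {ζ : ℝ} (hζ : 0 < ζ) (n k : ℕ) :
    risingFactorial ζ n * risingFactorial (ζ + n) k = risingFactorial ζ (n + k) := by
  unfold risingFactorial
  have h1 : Real.Gamma (ζ + n) ≠ 0 := (Real.Gamma_pos_of_pos (by positivity)).ne'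
  have h2 : Real.Gamma ζ ≠ 0 := (Real.Gamma_pos_of_pos hζ).ne'
  rw [show ((n + k : ℕ) : ℝ) = (n : ℝ) + k by push_cast; ring,
    show ζ + ((n : ℝ) + k) = (ζ + n) + k by ring]
  field_simp

/-- Log-convexity consequence: `x^μ Γ(x) ≤ 2 Γ(x+μ)` for `μ ≤ x`, `0 < μ ≤ 1`. -/
private lemma gamma_ratio {μ x : ℝ} (hμ : 0 < μ) (hμ1 : μ ≤ 1) (hx : μ ≤ x) :
    x ^ μ * Real.Gamma x ≤ 2 * Real.Gamma (x + μ) := by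
  have hx0 : 0 < x := lt_of_lt_of_le hμ hx
  have hGx : 0 < Real.Gamma x := Real.Gamma_pos_of_pos hx0
  have hGxμ : 0 < Real.Gamma (x + μ) := Real.Gamma_pos_of_pos (by linarith)
  have key : x * Real.Gamma x ≤ 2 * x ^ (1 - μ) * Real.Gamma (x + μ) := by
    rcases eq_or_lt_of_le hμ1 with h1 | h1
    · rw [h1] at hGxμ ⊢
      rw [show (1:ℝ) - 1 = 0 by norm_num, Real.rpow_zero, Real.Gamma_add_one hx0.ne']
      nlinarith [mul_pos hx0 hGx]
    · have hconv := Real.Gamma_mul_add_mul_le_rpow_Gamma_mul_rpow_Gamma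
        (s := x + μ) (t := x + μ + 1) (a := μ) (b := 1 - μ)
        (by linarith) (by linarith) hμ (by linarith) (by ring)
      rw [show μ * (x + μ) + (1 - μ) * (x + μ + 1) = x + 1 by ring,
        Real.Gamma_add_one hx0.ne',
        show x + μ + 1 = (x + μ) + 1 from rfl,
        Real.Gamma_add_one (by positivity : (x + μ) ≠ 0)] at hconv
      have hrhs : Real.Gamma (x + μ) ^ μ * ((x + μ) * Real.Gamma (x + μ)) ^ (1 - μ)
          = (x + μ) ^ (1 - μ) * Real.Gamma (x + μ) := by
        rw [Real.mul_rpow (by linarith : (0:ℝ) ≤ x + μ) hGxμ.le,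
          show Real.Gamma (x + μ) ^ μ * ((x + μ) ^ (1 - μ) * Real.Gamma (x + μ) ^ (1 - μ))
            = (x + μ) ^ (1 - μ) * (Real.Gamma (x + μ) ^ μ * Real.Gamma (x + μ) ^ (1 - μ)) from by
              ring,
          ← Real.rpow_add hGxμ, show μ + (1 - μ) = (1 : ℝ) by ring, Real.rpow_one]
      rw [hrhs] at hconv
      have hb : (x + μ) ^ (1 - μ) ≤ 2 * x ^ (1 - μ) := by
        calc (x + μ) ^ (1 - μ) ≤ (2 * x) ^ (1 - μ) := by
              apply Real.rpow_le_rpow (by linarith) (by linarith) (by linarith)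
          _ = 2 ^ (1 - μ) * x ^ (1 - μ) := Real.mul_rpow (by norm_num) hx0.le
          _ ≤ 2 * x ^ (1 - μ) := by
              have h2 : (2:ℝ) ^ (1 - μ) ≤ 2 ^ (1:ℝ) :=
                Real.rpow_le_rpow_of_exponent_le (by norm_num) (by linarith)
              rw [Real.rpow_one] at h2
              exact mul_le_mul_of_nonneg_right h2 (Real.rpow_nonneg hx0.le _)
      calc x * Real.Gamma x ≤ (x + μ) ^ (1 - μ) * Real.Gamma (x + μ) := hconv
        _ ≤ (2 * x ^ (1 - μ)) * Real.Gamma (x + μ) :=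
            mul_le_mul_of_nonneg_right hb hGxμ.le
        _ = 2 * x ^ (1 - μ) * Real.Gamma (x + μ) := by ring
  have hxp : (0:ℝ) < x ^ (1 - μ) := Real.rpow_pos_of_pos hx0 _
  have hxx : x ^ μ * x ^ (1 - μ) = x := by
    rw [← Real.rpow_add hx0, show μ + (1 - μ) = (1:ℝ) by ring, Real.rpow_one]
  rw [← mul_le_mul_iff_of_pos_right hxp]
  calc x ^ μ * Real.Gamma x * x ^ (1 - μ) = (x ^ μ * x ^ (1 - μ)) * Real.Gamma x := by ring
    _ = x * Real.Gamma x := by rw [hxx]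
    _ ≤ 2 * x ^ (1 - μ) * Real.Gamma (x + μ) := key
    _ = 2 * Real.Gamma (x + μ) * x ^ (1 - μ) := by ring

/-- The basic series defining the Mittag-Leffler function converges (absolutely). -/
private lemma summable_core {μ ϑ ζ : ℝ} (hμ : 0 < μ) (hμ1 : μ ≤ 1) (hζ : 0 < ζ)
    (hϑ : 0 < ϑ) (y : ℝ) :
    Summable fun m : ℕ =>
      risingFactorial ζ m * y ^ m / (m.factorial * Real.Gamma (μ * m + ϑ)) := by
  have habs : ∀ j : ℕ,
      |risingFactorial ζ j * y ^ j / (j.factorial * Real.Gamma (μ * j + ϑ))|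
      = risingFactorial ζ j * |y| ^ j / (j.factorial * Real.Gamma (μ * j + ϑ)) := by
    intro j
    have hG : (0:ℝ) < Real.Gamma (μ * j + ϑ) := Real.Gamma_pos_of_pos (by positivity)
    have hF : (0:ℝ) < (j.factorial : ℝ) := by positivity
    rw [abs_div, abs_mul, abs_pow, abs_of_pos (rf_pos hζ j), abs_of_pos (mul_pos hF hG)]
  apply summable_of_ratio_norm_eventually_le (r := 1/2) (by norm_num)
  have t1 : Filter.Tendsto (fun m : ℕ => μ * m + ϑ) Filter.atTop Filter.atTop := by
    apply Filter.tendsto_atTop_add_const_right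
    exact Filter.Tendsto.const_mul_atTop hμ tendsto_natCast_atTop_atTop
  have t2 : Filter.Tendsto (fun m : ℕ => (μ * m + ϑ) ^ μ) Filter.atTop Filter.atTop :=
    (tendsto_rpow_atTop hμ).comp t1
  filter_upwards [t2.eventually_ge_atTop (4 * ((ζ + 1) * (|y| + 1))),
    t1.eventually_ge_atTop μ] with m hm hmμ
  have hX0 : (0:ℝ) < μ * m + ϑ := by positivity
  have hGX : 0 < Real.Gamma (μ * m + ϑ) := Real.Gamma_pos_of_pos hX0
  have hGX' : 0 < Real.Gamma ((μ * m + ϑ) + μ) := Real.Gamma_pos_of_pos (by positivity)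
  have hR : 0 < risingFactorial ζ m := rf_pos hζ m
  have hF : (0:ℝ) < (m.factorial : ℝ) := by positivity
  have hratio : (μ * m + ϑ) ^ μ * Real.Gamma (μ * m + ϑ)
      ≤ 2 * Real.Gamma ((μ * m + ϑ) + μ) := gamma_ratio hμ hμ1 hmμ
  have key : (ζ + m) * |y| * Real.Gamma (μ * m + ϑ)
      ≤ 1/2 * (((m:ℝ) + 1) * Real.Gamma ((μ * m + ϑ) + μ)) := by
    have hy : (0:ℝ) ≤ |y| := abs_nonneg y
    have hm0 : (0:ℝ) ≤ (m:ℝ) := Nat.cast_nonneg m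
    have hc1 : (ζ + (m:ℝ)) * |y| ≤ ((m:ℝ) + 1) * ((ζ + 1) * (|y| + 1)) := by
      nlinarith [mul_nonneg hm0 hy, mul_nonneg (mul_nonneg hm0 hζ.le) hy,
        mul_nonneg hm0 hζ.le]
    calc (ζ + (m:ℝ)) * |y| * Real.Gamma (μ * m + ϑ)
        ≤ (((m:ℝ) + 1) * ((ζ + 1) * (|y| + 1))) * Real.Gamma (μ * m + ϑ) :=
          mul_le_mul_of_nonneg_right hc1 hGX.le
      _ = ((m:ℝ) + 1) / 4 * (4 * ((ζ + 1) * (|y| + 1)) * Real.Gamma (μ * m + ϑ)) := by ring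
      _ ≤ ((m:ℝ) + 1) / 4 * ((μ * m + ϑ) ^ μ * Real.Gamma (μ * m + ϑ)) := by
          apply mul_le_mul_of_nonneg_left _ (by positivity)
          exact mul_le_mul_of_nonneg_right hm hGX.le
      _ ≤ ((m:ℝ) + 1) / 4 * (2 * Real.Gamma ((μ * m + ϑ) + μ)) :=
          mul_le_mul_of_nonneg_left hratio (by positivity)
      _ = 1/2 * (((m:ℝ) + 1) * Real.Gamma ((μ * m + ϑ) + μ)) := by ring
  rw [Real.norm_eq_abs, Real.norm_eq_abs, habs, habs,
    show μ * ((m + 1 : ℕ) : ℝ) + ϑ = (μ * m + ϑ) + μ by push_cast; ring,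
    rf_succ hζ m, pow_succ, Nat.factorial_succ]
  push_cast
  rw [← mul_div_assoc, div_le_div_iff₀ (by positivity) (by positivity)]
  calc (ζ + (m:ℝ)) * risingFactorial ζ m * (|y| ^ m * |y|)
        * ((m.factorial : ℝ) * Real.Gamma (μ * m + ϑ))
      = (risingFactorial ζ m * |y| ^ m * (m.factorial : ℝ))
          * ((ζ + (m:ℝ)) * |y| * Real.Gamma (μ * m + ϑ)) := by ring
    _ ≤ (risingFactorial ζ m * |y| ^ m * (m.factorial : ℝ))
          * (1/2 * (((m:ℝ) + 1) * Real.Gamma ((μ * m + ϑ) + μ))) :=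
          mul_le_mul_of_nonneg_left key (by positivity)
    _ = 1/2 * (risingFactorial ζ m * |y| ^ m)
          * (((m:ℝ) + 1) * (m.factorial : ℝ) * Real.Gamma ((μ * m + ϑ) + μ)) := by ring

private lemma antidiag_sum (m : ℕ) (c u v : ℝ) :
    ∑ p ∈ Finset.HasAntidiagonal.antidiagonal m, c * ((m.choose p.1 : ℝ)) * u ^ p.1 * v ^ p.2
      = c * (u + v) ^ m := by
  rw [Finset.Nat.sum_antidiagonal_eq_sum_range_succ_mk, add_pow, Finset.mul_sum]
  exact Finset.sum_congr rfl fun i _ => by ring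

/-- All the work: absolute summability of the double series and the PGF identity. -/
private lemma main_key {μ ϑ ζ x : ℝ} (hμ : 0 < μ) (hμ1 : μ ≤ 1) (hζ : 0 < ζ)
    (hϑ0 : 0 < ϑ) (hx : 0 < x) (s : ℝ) :
    (Summable fun p : ℕ × ℕ =>
      |s ^ p.1 * (risingFactorial ζ p.1 * Real.Gamma ϑ * x ^ p.1 / p.1.factorial *
        (risingFactorial (ζ + p.1) p.2 * (-x) ^ p.2 /
          (p.2.factorial * Real.Gamma (μ * (p.1 + p.2 : ℕ) + ϑ))))|) ∧
    ((∑' n : ℕ, s ^ n * (risingFactorial ζ n * Real.Gamma ϑ * x ^ n / n.factorial *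
        ∑' k : ℕ, risingFactorial (ζ + n) k * (-x) ^ k /
          (k.factorial * Real.Gamma (μ * (n + k : ℕ) + ϑ)))
      = Real.Gamma ϑ * mittagLeffler μ ϑ ζ (x * (s - 1)))) := by
  have hϑG : 0 < Real.Gamma ϑ := Real.Gamma_pos_of_pos hϑ0
  set a : ℕ × ℕ → ℝ := fun p =>
    s ^ p.1 * (risingFactorial ζ p.1 * Real.Gamma ϑ * x ^ p.1 / p.1.factorial *
      (risingFactorial (ζ + p.1) p.2 * (-x) ^ p.2 /
        (p.2.factorial * Real.Gamma (μ * (p.1 + p.2 : ℕ) + ϑ)))) with haDef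
  set d : ℕ → ℝ := fun m => Real.Gamma ϑ * risingFactorial ζ m * x ^ m /
      (m.factorial * Real.Gamma (μ * m + ϑ)) with hdDef
  have hd_pos : ∀ m, 0 < d m := by
    intro m
    have hG : (0:ℝ) < Real.Gamma (μ * m + ϑ) := Real.Gamma_pos_of_pos (by positivity)
    have := rf_pos hζ m
    rw [hdDef]
    positivity
  -- pointwise identity
  have ha : ∀ p : ℕ × ℕ,
      a p = d (p.1 + p.2) * ((p.1 + p.2).choose p.1 : ℝ) * s ^ p.1 * (-1 : ℝ) ^ p.2 := by
    rintro ⟨n, k⟩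
    have hG : Real.Gamma (μ * ((n + k : ℕ) : ℝ) + ϑ) ≠ 0 :=
      (Real.Gamma_pos_of_pos (by positivity)).ne'
    have hfn : ((n.factorial : ℝ)) ≠ 0 := by positivity
    have hfk : ((k.factorial : ℝ)) ≠ 0 := by positivity
    have hfnk : (((n + k).factorial : ℝ)) ≠ 0 := by positivity
    have hchoose : (((n + k).choose n : ℕ) : ℝ)
        = ((n + k).factorial : ℝ) / ((n.factorial : ℝ) * (k.factorial : ℝ)) := by
      rw [Nat.cast_choose ℝ (Nat.le_add_right n k), Nat.add_sub_cancel_left]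
    simp only [haDef, hdDef]
    rw [hchoose, ← rf_mul hζ n k, neg_pow, pow_add]
    field_simp
  -- absolute value of each term
  have habs : ∀ p : ℕ × ℕ,
      |a p| = d (p.1 + p.2) * (((p.1 + p.2).choose p.1 : ℕ) : ℝ) * |s| ^ p.1
        * (1 : ℝ) ^ p.2 := by
    intro p
    rw [ha p, abs_mul, abs_mul, abs_mul, abs_of_pos (hd_pos _), abs_pow, abs_pow,
      Nat.abs_cast, abs_neg, abs_one]
  -- fiberwise (antidiagonal) sums of the absolute values
  have hfiber_abs : ∀ m : ℕ, ∑ p ∈ Finset.HasAntidiagonal.antidiagonal m, |a p| = d m * (|s| + 1) ^ m := by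
    intro m
    rw [← antidiag_sum m (d m) |s| 1]
    apply Finset.sum_congr rfl
    rintro ⟨n, k⟩ hp
    rw [Finset.HasAntidiagonal.mem_antidiagonal] at hp
    rw [habs]
    simp only [hp]
  -- the comparison series is summable
  have hcomp : Summable fun m : ℕ => d m * (|s| + 1) ^ m := by
    apply ((summable_core hμ hμ1 hζ hϑ0 (x * (|s| + 1))).mul_left (Real.Gamma ϑ)).congr
    intro m
    simp only [hdDef]
    rw [mul_pow]
    ring
  -- summability of the (absolute) double series via the antidiagonal decomposition
  have hFe : Summable fun σ : Σ m : ℕ, (Finset.HasAntidiagonal.antidiagonal m : Finset (ℕ × ℕ)) =>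
      |a (Finset.HasAntidiagonal.sigmaAntidiagonalEquivProd σ)| := by
    rw [summable_sigma_of_nonneg (fun σ => abs_nonneg _)]
    constructor
    · intro m; exact Summable.of_finite
    · apply hcomp.congr
      intro m
      rw [← hfiber_abs m, ← Finset.tsum_subtype]
      rfl
  have hFabs : Summable fun p : ℕ × ℕ => |a p| := by
    rw [← (Finset.HasAntidiagonal.sigmaAntidiagonalEquivProd (A := ℕ)).summable_iff]
    exact hFe
  have hA : Summable a := Summable.of_abs hFabs
  refine ⟨hFabs, ?_⟩
  -- the inner sums: s^n * (fcp term) = ∑' k, a (n, k)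
  have h1 : ∀ n : ℕ,
      s ^ n * (risingFactorial ζ n * Real.Gamma ϑ * x ^ n / n.factorial *
        ∑' k : ℕ, risingFactorial (ζ + n) k * (-x) ^ k /
          (k.factorial * Real.Gamma (μ * (n + k : ℕ) + ϑ)))
      = ∑' k : ℕ, a (n, k) := by
    intro n
    rw [show (∑' k : ℕ, a (n, k))
        = ∑' k : ℕ, (s ^ n * (risingFactorial ζ n * Real.Gamma ϑ * x ^ n / n.factorial)) *
          (risingFactorial (ζ + n) k * (-x) ^ k /
            (k.factorial * Real.Gamma (μ * (n + k : ℕ) + ϑ)))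
        from tsum_congr fun k => by simp only [haDef]; ring, tsum_mul_left]
    ring
  -- antidiagonal fiber sums of `a` itself
  have hfiber : ∀ m : ℕ, ∑ p ∈ Finset.HasAntidiagonal.antidiagonal m, a p = d m * (s - 1) ^ m := by
    intro m
    rw [show s - 1 = s + (-1) by ring, ← antidiag_sum m (d m) s (-1)]
    apply Finset.sum_congr rfl
    rintro ⟨n, k⟩ hp
    rw [Finset.HasAntidiagonal.mem_antidiagonal] at hp
    rw [ha]
    simp only [hp]
  calc (∑' n : ℕ, s ^ n * (risingFactorial ζ n * Real.Gamma ϑ * x ^ n / n.factorial *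
        ∑' k : ℕ, risingFactorial (ζ + n) k * (-x) ^ k /
          (k.factorial * Real.Gamma (μ * (n + k : ℕ) + ϑ))))
      = ∑' n : ℕ, ∑' k : ℕ, a (n, k) := tsum_congr h1
    _ = ∑' p : ℕ × ℕ, a p := (Summable.tsum_prod hA).symm
    _ = ∑' σ : Σ m : ℕ, (Finset.HasAntidiagonal.antidiagonal m : Finset (ℕ × ℕ)), a (Finset.HasAntidiagonal.sigmaAntidiagonalEquivProd σ) :=
        ((Finset.HasAntidiagonal.sigmaAntidiagonalEquivProd (A := ℕ)).tsum_eq a).symm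
    _ = ∑' m : ℕ, ∑' p : (Finset.HasAntidiagonal.antidiagonal m : Finset (ℕ × ℕ)), a p :=
        Summable.tsum_sigma ((Finset.HasAntidiagonal.sigmaAntidiagonalEquivProd (A := ℕ)).summable_iff.mpr hA)
    _ = ∑' m : ℕ, d m * (s - 1) ^ m := by
        apply tsum_congr
        intro m
        rw [← hfiber m, ← Finset.tsum_subtype]
    _ = Real.Gamma ϑ * mittagLeffler μ ϑ ζ (x * (s - 1)) := by
        rw [mittagLeffler, ← tsum_mul_left]
        apply tsum_congr
        intro m
        simp only [hdDef]
        rw [mul_pow]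
        ring

end Aux

/-- The probability generating function of the FCP:
`∑_n s^n P(n,t) = Γ(ϑ) E_{μ,ϑ}^{ζ}(λ t^θ (s−1))`, the underlying double series
converging absolutely; in particular `∑_n P(n,t) = 1`. -/
theorem fcp_pgf (μ ϑ ζ θ lam t : ℝ) (hμ : 0 < μ) (hμ1 : μ ≤ 1) (hζ : 0 < ζ)
    (hϑ : μ * ζ ≤ ϑ) (hθ : 0 < θ) (hθ1 : θ ≤ 1) (hlam : 0 < lam) (ht : 0 < t) (s : ℝ) :
    (Summable fun p : ℕ × ℕ =>
      |s ^ p.1 * (risingFactorial ζ p.1 * Real.Gamma ϑ * (lam * t ^ θ) ^ p.1 / p.1.factorial *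
        (risingFactorial (ζ + p.1) p.2 * (-(lam * t ^ θ)) ^ p.2 /
          (p.2.factorial * Real.Gamma (μ * (p.1 + p.2 : ℕ) + ϑ))))|) ∧
    (∑' n : ℕ, s ^ n * fcpP μ ϑ ζ θ lam n t
      = Real.Gamma ϑ * mittagLeffler μ ϑ ζ (lam * t ^ θ * (s - 1))) ∧
    (∑' n : ℕ, fcpP μ ϑ ζ θ lam n t = 1) := by
  have hϑ0 : 0 < ϑ := lt_of_lt_of_le (mul_pos hμ hζ) hϑ
  have hϑG : 0 < Real.Gamma ϑ := Real.Gamma_pos_of_pos hϑ0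
  have hx : 0 < lam * t ^ θ := by positivity
  obtain ⟨h1, h2⟩ := main_key hμ hμ1 hζ hϑ0 hx s
  obtain ⟨-, h2'⟩ := main_key hμ hμ1 hζ hϑ0 hx 1
  have hML0 : mittagLeffler μ ϑ ζ 0 = 1 / Real.Gamma ϑ := by
    rw [mittagLeffler, tsum_eq_single 0 ?_]
    · norm_num [rf_zero hζ]
    · intro m hm
      simp [zero_pow hm]
  refine ⟨h1, ?_, ?_⟩
  · simp only [fcpP]
    exact h2
  · simp only [one_pow, one_mul, sub_self, mul_zero] at h2'
    rw [hML0] at h2'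
    simp only [fcpP]
    rw [h2', mul_one_div, div_self hϑG.ne']
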